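/- arXiv:0912.0488 — 4 statements merged into one kernel-verified Lean document; each statement's English description precedes it below -/
import Mathlib

section
/- Let U, H be real Hilbert spaces, U_ad ⊆ U closed convex nonempty, α > 0, z ∈ H. Let S, S_h : U → H be bounded linear operators (the continuous and discrete solution operators). Let u minimize J(v) = (1/2)‖S v − z‖² + (α/2)‖v‖² over U_ad, and let u_h minimize J_h(v) = (1/2)‖S_h v − z‖² + (α/2)‖v‖² over U_ad. Set p(u) = S*(S u − z), p̃_h(u) = S_h*(S u − z), y(u) = S u, y_h(u) = S_h u, y_h = S_h u_h. Then α‖u − u_h‖² + (1/2)‖y(u) − y_h‖² ≤ ⟨p(u) − p̃_h(u), u_h − u⟩ + (1/2)‖y(u) − y_h(u)‖². -/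
open RealInnerProductSpace

private lemma nonneg_of_affine (a b : ℝ)
    (h : ∀ t : ℝ, 0 < t → t ≤ 1 → 0 ≤ a + b * t) : 0 ≤ a := by
  have htend : Filter.Tendsto (fun t : ℝ => a + b * t) (nhdsWithin 0 (Set.Ioi 0)) (nhds a) := by
    have : Filter.Tendsto (fun t : ℝ => a + b * t) (nhds 0) (nhds (a + b * 0)) := by
      exact (continuous_const.add (continuous_const.mul continuous_id)).tendsto 0
    simpa using this.mono_left nhdsWithin_le_nhds
  have hev : ∀ᶠ t in nhdsWithin (0:ℝ) (Set.Ioi 0), 0 ≤ a + b * t := by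
    filter_upwards [Ioc_mem_nhdsGT_of_mem (by norm_num : (0:ℝ) ∈ Set.Ico (0:ℝ) 1)] with t ht
    exact h t ht.1 ht.2
  exact ge_of_tendsto htend hev

private lemma VI {U H : Type*} [NormedAddCommGroup U] [InnerProductSpace ℝ U]
    [NormedAddCommGroup H] [InnerProductSpace ℝ H]
    (C : Set U) (hCcv : Convex ℝ C) (α : ℝ) (T : U →L[ℝ] H) (z : H)
    (u : U) (hu : u ∈ C)
    (hmin : ∀ v ∈ C,
      (1 / 2) * ‖T u - z‖ ^ 2 + (α / 2) * ‖u‖ ^ 2 ≤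
        (1 / 2) * ‖T v - z‖ ^ 2 + (α / 2) * ‖v‖ ^ 2)
    (v : U) (hv : v ∈ C) :
    0 ≤ ⟪T u - z, T (v - u)⟫ + α * ⟪u, v - u⟫ := by
  set w := v - u with hw
  apply nonneg_of_affine _ ((1/2) * ‖T w‖ ^ 2 + (α/2) * ‖w‖ ^ 2)
  intro t ht ht1
  have hmem : u + t • w ∈ C := by
    have := hCcv hu hv (by linarith : (0:ℝ) ≤ 1 - t) ht.le (by ring)
    have heq : (1 - t) • u + t • v = u + t • w := by rw [hw]; module
    rwa [heq] at this
  have hJ := hmin _ hmem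
  have e1 : ‖T (u + t • w) - z‖ ^ 2
      = ‖T u - z‖ ^ 2 + 2 * (t * ⟪T u - z, T w⟫) + t ^ 2 * ‖T w‖ ^ 2 := by
    have heq : T (u + t • w) - z = (T u - z) + t • (T w) := by
      rw [map_add, map_smul]; abel
    rw [heq, norm_add_sq_real, real_inner_smul_right, norm_smul,
      Real.norm_eq_abs, abs_of_pos ht, mul_pow]
  have e2 : ‖u + t • w‖ ^ 2 = ‖u‖ ^ 2 + 2 * (t * ⟪u, w⟫) + t ^ 2 * ‖w‖ ^ 2 := by
    rw [norm_add_sq_real, real_inner_smul_right, norm_smul,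
      Real.norm_eq_abs, abs_of_pos ht, mul_pow]
  rw [e1, e2] at hJ
  have key : 0 ≤ (⟪T u - z, T w⟫ + α * ⟪u, w⟫) * t
      + ((1/2) * ‖T w‖ ^ 2 + (α/2) * ‖w‖ ^ 2) * t ^ 2 := by nlinarith
  nlinarith [key, ht]

/-- Main error estimate for variational discretization (Theorem 2.3). -/
theorem stmt2
    {U H : Type*} [NormedAddCommGroup U] [InnerProductSpace ℝ U] [CompleteSpace U]
    [NormedAddCommGroup H] [InnerProductSpace ℝ H] [CompleteSpace H]
    (C : Set U) (hCne : C.Nonempty) (hCcl : IsClosed C) (hCcv : Convex ℝ C)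
    (α : ℝ) (hα : 0 < α) (S Sh : U →L[ℝ] H) (z : H)
    (u : U) (hu : u ∈ C)
    (hmin : ∀ v ∈ C,
      (1 / 2) * ‖S u - z‖ ^ 2 + (α / 2) * ‖u‖ ^ 2 ≤
        (1 / 2) * ‖S v - z‖ ^ 2 + (α / 2) * ‖v‖ ^ 2)
    (uh : U) (huh : uh ∈ C)
    (hminh : ∀ v ∈ C,
      (1 / 2) * ‖Sh uh - z‖ ^ 2 + (α / 2) * ‖uh‖ ^ 2 ≤
        (1 / 2) * ‖Sh v - z‖ ^ 2 + (α / 2) * ‖v‖ ^ 2) :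
    α * ‖u - uh‖ ^ 2 + (1 / 2) * ‖S u - Sh uh‖ ^ 2 ≤
      ⟪S.adjoint (S u - z) - Sh.adjoint (S u - z), uh - u⟫ +
        (1 / 2) * ‖S u - Sh u‖ ^ 2 := by
  have h1 := VI C hCcv α S z u hu hmin uh huh
  have h2 := VI C hCcv α Sh z uh huh hminh u hu
  -- inner term of the goal
  have hadj : ⟪S.adjoint (S u - z) - Sh.adjoint (S u - z), uh - u⟫
      = ⟪S u - z, S (uh - u)⟫ - ⟪S u - z, Sh (uh - u)⟫ := by
    rw [inner_sub_left, ContinuousLinearMap.adjoint_inner_left,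
      ContinuousLinearMap.adjoint_inner_left]
  -- α terms
  have halpha : ⟪u, uh - u⟫ + ⟪uh, u - uh⟫ = -‖u - uh‖ ^ 2 := by
    have : ⟪u, uh - u⟫ + ⟪uh, u - uh⟫ = -⟪u - uh, u - uh⟫ := by
      simp only [inner_sub_left, inner_sub_right]
      rw [real_inner_comm u uh]
      ring
    rw [this, real_inner_self_eq_norm_sq]
  -- rewrite the Sh(u - uh) inner product
  have hShdiff : Sh (u - uh) = -(Sh (uh - u)) := by
    rw [map_sub, map_sub]; abel
  have hkey : ⟪Sh uh - z, Sh (u - uh)⟫ + ⟪S u - z, Sh (uh - u)⟫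
      = -‖S u - Sh uh‖ ^ 2 + ⟪S u - Sh uh, S u - Sh u⟫ := by
    rw [hShdiff, inner_neg_right]
    have hd : Sh (uh - u) = Sh uh - Sh u := by rw [map_sub]
    rw [hd]
    have expand : -⟪Sh uh - z, Sh uh - Sh u⟫ + ⟪S u - z, Sh uh - Sh u⟫
        = ⟪S u - Sh uh, Sh uh - Sh u⟫ := by
      simp only [inner_sub_left]
      ring
    rw [expand]
    have split : (Sh uh - Sh u : H) = -(S u - Sh uh) + (S u - Sh u) := by abel
    rw [split, inner_add_right, inner_neg_right, real_inner_self_eq_norm_sq]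
  have cs : ⟪S u - Sh uh, S u - Sh u⟫ ≤ ‖S u - Sh uh‖ * ‖S u - Sh u‖ :=
    real_inner_le_norm _ _
  have sq := sq_nonneg (‖S u - Sh uh‖ - ‖S u - Sh u‖)
  rw [hadj]
  nlinarith [h1, h2, halpha, hkey, cs, sq]
end

section
/- Let U be a real Hilbert space of functions (e.g. L²(Ω)), α > 0, S_h : U → H bounded linear, z ∈ H. Let a, b, a_h, b_h ∈ L^∞(Ω) with a ≤ b and a_h ≤ b_h pointwise. Let u_h be the unique minimizer of (1/2)‖S_h v − z‖² + (α/2)‖v‖² over {a ≤ v ≤ b} and u_hh the unique minimizer over {a_h ≤ v ≤ b_h}. Then ‖u_hh − u_h‖_{L²} ≤ (1 + ‖S_h‖²/α) (‖a − a_h‖_{L²} + ‖b − b_h‖_{L²}). -/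
open RealInnerProductSpace MeasureTheory

section Aux

/-- Scalar projection VI: for `p = max A (min B Q)` and `v ∈ [A,B]`,
`(p - Q)*(v - p) ≥ 0`. -/
lemma scalar_vi {A B Q v : ℝ} (hAB : A ≤ B) (hv1 : A ≤ v) (hv2 : v ≤ B) :
    0 ≤ (max A (min B Q) - Q) * (v - max A (min B Q)) := by
  rcases le_total Q A with h | h
  · rw [min_eq_right (h.trans hAB), max_eq_left h]
    exact mul_nonneg (by linarith) (by linarith)
  · rcases le_total B Q with h2 | h2
    · rw [min_eq_left h2, max_eq_right hAB]
      nlinarith [hv2, h2]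
    · rw [min_eq_right h2, max_eq_right h]
      simp

/-- Scalar projection is Lipschitz in the bounds. -/
lemma scalar_lip {A B A' B' Q : ℝ} :
    |max A' (min B' Q) - max A (min B Q)| ≤ |A' - A| + |B' - B| := by
  have h1 : |max A' (min B' Q) - max A (min B' Q)| ≤ |A' - A| :=
    abs_max_sub_max_le_abs _ _ _
  have h2 : |max A (min B' Q) - max A (min B Q)| ≤ |min B' Q - min B Q| := by
    have := abs_max_sub_max_le_max A (min B' Q) A (min B Q)
    simpa using this
  have h3 : |min B' Q - min B Q| ≤ |B' - B| := by
    have := abs_min_sub_min_le_max B' Q B Q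
    simpa using this
  calc |max A' (min B' Q) - max A (min B Q)|
      ≤ |max A' (min B' Q) - max A (min B' Q)| + |max A (min B' Q) - max A (min B Q)| :=
        abs_sub_le _ _ _
    _ ≤ |A' - A| + |B' - B| := add_le_add h1 (h2.trans h3)

/-- Variational inequality from minimality along a segment. -/
lemma vi_of_min {U H : Type*} [NormedAddCommGroup U] [InnerProductSpace ℝ U]
    [NormedAddCommGroup H] [InnerProductSpace ℝ H]
    (α : ℝ) (S : U →L[ℝ] H) (z : H) (u d : U)
    (h : ∀ t : ℝ, 0 < t → t ≤ 1 →
      (1/2)*‖S u - z‖^2 + (α/2)*‖u‖^2 ≤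
        (1/2)*‖S (u + t • d) - z‖^2 + (α/2)*‖u + t • d‖^2) :
    0 ≤ ⟪S u - z, S d⟫ + α * ⟪u, d⟫ := by
  set A : ℝ := ⟪S u - z, S d⟫ + α * ⟪u, d⟫ with hA
  set B : ℝ := (1/2)*‖S d‖^2 + (α/2)*‖d‖^2 with hB
  have key : ∀ t : ℝ, 0 < t → t ≤ 1 → 0 ≤ A + t * B := by
    intro t ht ht1
    have hexp := h t ht ht1
    have e1 : S (u + t • d) - z = (S u - z) + t • (S d) := by
      rw [map_add, S.map_smul]; abel
    have e2 : ‖(S u - z) + t • (S d)‖^2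
        = ‖S u - z‖^2 + 2 * (t * ⟪S u - z, S d⟫) + t^2 * ‖S d‖^2 := by
      rw [norm_add_sq_real, real_inner_smul_right, norm_smul]
      simp [mul_pow, sq_abs]
    have e3 : ‖u + t • d‖^2 = ‖u‖^2 + 2 * (t * ⟪u, d⟫) + t^2 * ‖d‖^2 := by
      rw [norm_add_sq_real, real_inner_smul_right, norm_smul]
      simp [mul_pow, sq_abs]
    rw [e1, e2, e3] at hexp
    have h4 : 0 ≤ t * (A + t * B) := by rw [hA, hB]; nlinarith [hexp]
    nlinarith [h4, ht]
  have htend : Filter.Tendsto (fun t : ℝ => A + t * B)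
      (nhdsWithin 0 (Set.Ioi 0)) (nhds A) := by
    have : Filter.Tendsto (fun t : ℝ => A + t * B) (nhds 0) (nhds (A + 0 * B)) :=
      (continuous_const.add (continuous_id.mul continuous_const)).tendsto 0
    simpa using this.mono_left nhdsWithin_le_nhds
  refine ge_of_tendsto htend ?_
  have h1 : ∀ᶠ t in nhdsWithin (0:ℝ) (Set.Ioi 0), t ∈ Set.Ioi (0:ℝ) :=
    eventually_mem_nhdsWithin
  have h2 : ∀ᶠ t in nhdsWithin (0:ℝ) (Set.Ioi 0), t < 1 :=
    (eventually_lt_nhds (by norm_num : (0:ℝ) < 1)).filter_mono nhdsWithin_le_nhds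
  filter_upwards [h1, h2] with t ht ht1
  exact key t ht ht1.le

variable {Ω : Type*} [MeasurableSpace Ω] {μ : Measure Ω}

/-- coeFn of the lattice projection. -/
lemma coeFn_proj (A B q : Lp ℝ 2 μ) :
    ∀ᵐ ω ∂μ, (A ⊔ (B ⊓ q)) ω = max (A ω) (min (B ω) (q ω)) := by
  filter_upwards [Lp.coeFn_sup A (B ⊓ q), Lp.coeFn_inf B q] with ω h1 h2
  rw [h1, Pi.sup_apply, h2, Pi.inf_apply]

/-- nonneg inner from a.e. pointwise nonneg product. -/
lemma inner_nonneg_of_ae (f g : Lp ℝ 2 μ) (h : ∀ᵐ ω ∂μ, 0 ≤ f ω * g ω) :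
    0 ≤ ⟪f, g⟫ := by
  rw [L2.inner_def]
  refine integral_nonneg_of_ae ?_
  filter_upwards [h] with ω hω
  simpa [RCLike.inner_apply, starRingEnd_apply, mul_comm] using hω

/-- integrated projection VI. -/
lemma proj_vi (A B q v : Lp ℝ 2 μ) (hAB : ∀ᵐ ω ∂μ, A ω ≤ B ω)
    (hv : ∀ᵐ ω ∂μ, A ω ≤ v ω ∧ v ω ≤ B ω) :
    0 ≤ ⟪(A ⊔ (B ⊓ q)) - q, v - (A ⊔ (B ⊓ q))⟫ := by
  set P : Lp ℝ 2 μ := A ⊔ (B ⊓ q) with hP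
  refine inner_nonneg_of_ae _ _ ?_
  filter_upwards [hAB, hv, coeFn_proj A B q, Lp.coeFn_sub P q, Lp.coeFn_sub v P]
    with ω h1 h2 h3 h4 h5
  rw [h4, h5, Pi.sub_apply, Pi.sub_apply, h3]
  exact scalar_vi h1 h2.1 h2.2

/-- admissibility of the lattice projection. -/
lemma proj_adm (A B q : Lp ℝ 2 μ) (hAB : ∀ᵐ ω ∂μ, A ω ≤ B ω) :
    ∀ᵐ ω ∂μ, A ω ≤ (A ⊔ (B ⊓ q)) ω ∧ (A ⊔ (B ⊓ q)) ω ≤ B ω := by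
  filter_upwards [hAB, coeFn_proj A B q] with ω h1 h2
  rw [h2]
  exact ⟨le_max_left _ _, max_le h1 (min_le_left _ _)⟩

end Aux

set_option maxHeartbeats 1000000 in
/-- Lemma 3.2 (Perturbed Bounds): stability of the variationally discretized
solution with respect to perturbations of the box constraints. -/
theorem stmt3
    {Ω : Type*} [MeasurableSpace Ω] (μ : Measure Ω) [IsFiniteMeasure μ]
    {H : Type*} [NormedAddCommGroup H] [InnerProductSpace ℝ H] [CompleteSpace H]
    (α : ℝ) (hα : 0 < α) (Sh : Lp ℝ 2 μ →L[ℝ] H) (z : H)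
    (a b ah bh : Lp ℝ 2 μ)
    (hab : ∀ᵐ ω ∂μ, a ω ≤ b ω) (habh : ∀ᵐ ω ∂μ, ah ω ≤ bh ω)
    (uh : Lp ℝ 2 μ)
    (huh_ad : ∀ᵐ ω ∂μ, a ω ≤ uh ω ∧ uh ω ≤ b ω)
    (huh_min : ∀ v : Lp ℝ 2 μ, (∀ᵐ ω ∂μ, a ω ≤ v ω ∧ v ω ≤ b ω) →
      (1 / 2) * ‖Sh uh - z‖ ^ 2 + (α / 2) * ‖uh‖ ^ 2 ≤
        (1 / 2) * ‖Sh v - z‖ ^ 2 + (α / 2) * ‖v‖ ^ 2)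
    (uhh : Lp ℝ 2 μ)
    (huhh_ad : ∀ᵐ ω ∂μ, ah ω ≤ uhh ω ∧ uhh ω ≤ bh ω)
    (huhh_min : ∀ v : Lp ℝ 2 μ, (∀ᵐ ω ∂μ, ah ω ≤ v ω ∧ v ω ≤ bh ω) →
      (1 / 2) * ‖Sh uhh - z‖ ^ 2 + (α / 2) * ‖uhh‖ ^ 2 ≤
        (1 / 2) * ‖Sh v - z‖ ^ 2 + (α / 2) * ‖v‖ ^ 2) :
    ‖uhh - uh‖ ≤ (1 + ‖Sh‖ ^ 2 / α) * (‖a - ah‖ + ‖b - bh‖) := by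
  classical
  -- segment admissibility
  have seg : ∀ (A B u v : Lp ℝ 2 μ), (∀ᵐ ω ∂μ, A ω ≤ u ω ∧ u ω ≤ B ω) →
      (∀ᵐ ω ∂μ, A ω ≤ v ω ∧ v ω ≤ B ω) → ∀ t : ℝ, 0 < t → t ≤ 1 →
      (∀ᵐ ω ∂μ, A ω ≤ (u + t • (v - u)) ω ∧ (u + t • (v - u)) ω ≤ B ω) := by
    intro A B u v hu hv t ht ht1
    filter_upwards [hu, hv, Lp.coeFn_add u (t • (v - u)), Lp.coeFn_smul t (v - u),
      Lp.coeFn_sub v u] with ω h1 h2 h3 h4 h5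
    rw [h3, Pi.add_apply, h4, Pi.smul_apply, h5, Pi.sub_apply, smul_eq_mul]
    constructor <;> nlinarith [h1.1, h1.2, h2.1, h2.2]
  -- raw VIs from minimality
  have VIuh : ∀ v : Lp ℝ 2 μ, (∀ᵐ ω ∂μ, a ω ≤ v ω ∧ v ω ≤ b ω) →
      0 ≤ ⟪Sh uh - z, Sh (v - uh)⟫ + α * ⟪uh, v - uh⟫ := by
    intro v hv
    exact vi_of_min α Sh z uh (v - uh) fun t ht ht1 =>
      huh_min _ (seg a b uh v huh_ad hv t ht ht1)
  have VIuhh : ∀ v : Lp ℝ 2 μ, (∀ᵐ ω ∂μ, ah ω ≤ v ω ∧ v ω ≤ bh ω) →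
      0 ≤ ⟪Sh uhh - z, Sh (v - uhh)⟫ + α * ⟪uhh, v - uhh⟫ := by
    intro v hv
    exact vi_of_min α Sh z uhh (v - uhh) fun t ht ht1 =>
      huhh_min _ (seg ah bh uhh v huhh_ad hv t ht ht1)
  -- the adjoint state
  set w : Lp ℝ 2 μ := (ContinuousLinearMap.adjoint Sh) (Sh uh - z) with hw
  set q : Lp ℝ 2 μ := (-α⁻¹) • w with hq
  have hqx : ∀ x : Lp ℝ 2 μ, α * ⟪q, x⟫ = -⟪Sh uh - z, Sh x⟫ := by
    intro x
    rw [hq, real_inner_smul_left, hw, ContinuousLinearMap.adjoint_inner_left]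
    field_simp
  -- VI for uh in projection form
  have VIuh' : ∀ v : Lp ℝ 2 μ, (∀ᵐ ω ∂μ, a ω ≤ v ω ∧ v ω ≤ b ω) →
      0 ≤ ⟪uh - q, v - uh⟫ := by
    intro v hv
    have h1 := VIuh v hv
    have h2 : α * ⟪uh - q, v - uh⟫ = ⟪Sh uh - z, Sh (v - uh)⟫ + α * ⟪uh, v - uh⟫ := by
      rw [inner_sub_left]
      have := hqx (v - uh)
      ring_nf
      ring_nf at this ⊢
      nlinarith [this]
    nlinarith [h1, h2, hα]
  -- the two projections
  set P : Lp ℝ 2 μ := a ⊔ (b ⊓ q) with hPdef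
  set p : Lp ℝ 2 μ := ah ⊔ (bh ⊓ q) with hpdef
  -- P = uh
  have hPuh : P = uh := by
    have h1 : 0 ≤ ⟪uh - q, P - uh⟫ := VIuh' P (proj_adm a b q hab)
    have h2 : 0 ≤ ⟪P - q, uh - P⟫ := proj_vi a b q uh hab huh_ad
    have h3 : ⟪uh - q, P - uh⟫ + ⟪P - q, uh - P⟫ = -‖P - uh‖^2 := by
      have e1 : uh - P = -(P - uh) := by abel
      rw [e1, inner_neg_right]
      have : ⟪uh - q, P - uh⟫ - ⟪P - q, P - uh⟫ = -⟪P - uh, P - uh⟫ := by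
        rw [← inner_sub_left]
        have e2 : uh - q - (P - q) = -(P - uh) := by abel
        rw [e2, inner_neg_left]
      rw [← sub_eq_add_neg, this, real_inner_self_eq_norm_sq]
    have h4 : ‖P - uh‖^2 ≤ 0 := by nlinarith [h1, h2, h3]
    have h5 : ‖P - uh‖ = 0 := by nlinarith [norm_nonneg (P - uh)]
    exact sub_eq_zero.mp (norm_eq_zero.mp h5)
  -- the perturbation e = p - uh
  set e : Lp ℝ 2 μ := p - uh with hedef
  set δ : ℝ := ‖a - ah‖ + ‖b - bh‖ with hδ
  have hδ0 : 0 ≤ δ := add_nonneg (norm_nonneg _) (norm_nonneg _)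
  have he : ‖e‖ ≤ δ := by
    set g : Lp ℝ 2 μ := |a - ah| + |b - bh| with hgdef
    have hg1 : ‖e‖ ≤ ‖g‖ := by
      refine Lp.norm_le_norm_of_ae_le ?_
      filter_upwards [coeFn_proj a b q, coeFn_proj ah bh q, Lp.coeFn_sub p uh,
        Lp.coeFn_add |a - ah| |b - bh|, Lp.coeFn_abs (a - ah), Lp.coeFn_abs (b - bh),
        Lp.coeFn_sub a ah, Lp.coeFn_sub b bh] with ω h1 h2 h3 h4 h5 h6 h7 h8
      have hg : g ω = |a ω - ah ω| + |b ω - bh ω| := by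
        rw [hgdef, h4, Pi.add_apply, h5, h6, h7, h8, Pi.sub_apply, Pi.sub_apply]
      have habs : |e ω| ≤ |a ω - ah ω| + |b ω - bh ω| := by
        rw [hedef, h3, Pi.sub_apply, ← hPuh, h1, h2]
        calc |max (ah ω) (min (bh ω) (q ω)) - max (a ω) (min (b ω) (q ω))|
            ≤ |ah ω - a ω| + |bh ω - b ω| := scalar_lip
          _ = |a ω - ah ω| + |b ω - bh ω| := by rw [abs_sub_comm, abs_sub_comm (bh ω)]
      have hg0 : 0 ≤ g ω := by rw [hg]; positivity
      rw [Real.norm_eq_abs, Real.norm_eq_abs, abs_of_nonneg hg0, hg]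
      exact habs
    have hg2 : ‖g‖ ≤ δ := by
      rw [hgdef, hδ]
      calc ‖|a - ah| + |b - bh|‖ ≤ ‖|a - ah|‖ + ‖|b - bh|‖ := norm_add_le _ _
        _ = ‖a - ah‖ + ‖b - bh‖ := by rw [norm_abs_eq_norm, norm_abs_eq_norm]
    exact hg1.trans hg2
  -- final combination
  have hpadm : ∀ᵐ ω ∂μ, ah ω ≤ p ω ∧ p ω ≤ bh ω := proj_adm ah bh q habh
  have h1 : 0 ≤ ⟪Sh uhh - z, Sh (p - uhh)⟫ + α * ⟪uhh, p - uhh⟫ := VIuhh p hpadm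
  have h2 : 0 ≤ ⟪p - q, uhh - p⟫ := proj_vi ah bh q uhh habh huhh_ad
  have h3 : α * ⟪p - q, uhh - p⟫
      = α * ⟪p, uhh - p⟫ + ⟪Sh uh - z, Sh (uhh - p)⟫ := by
    rw [inner_sub_left, mul_sub, hqx (uhh - p)]
    ring
  have key : α * ‖uhh - p‖^2 ≤ -⟪Sh (uhh - uh), Sh (uhh - p)⟫ := by
    have e1 : ⟪Sh uhh - z, Sh (p - uhh)⟫ + ⟪Sh uh - z, Sh (uhh - p)⟫
        = -⟪Sh (uhh - uh), Sh (uhh - p)⟫ := by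
      have hm : Sh (p - uhh) = -(Sh (uhh - p)) := by
        rw [← map_neg]; congr 1; abel
      rw [hm, inner_neg_right]
      have hsub : Sh (uhh - uh) = (Sh uhh - z) - (Sh uh - z) := by
        rw [map_sub]; abel
      rw [hsub]
      simp only [inner_sub_left]
      ring
    have e2 : α * ⟪uhh, p - uhh⟫ + α * ⟪p, uhh - p⟫ = -(α * ‖uhh - p‖^2) := by
      have h5 : ⟪uhh, p - uhh⟫ = -⟪uhh, uhh - p⟫ := by
        rw [← inner_neg_right]; congr 1; abel
      rw [h5, ← real_inner_self_eq_norm_sq, inner_sub_left]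
      ring
    have h4 : 0 ≤ α * ⟪p - q, uhh - p⟫ := mul_nonneg hα.le h2
    nlinarith [h1, h4, h3, e1, e2]
  have hr : ‖uhh - p‖ ≤ ‖Sh‖^2 / α * δ := by
    have hb1 : -⟪Sh (uhh - uh), Sh (uhh - p)⟫ ≤ ‖Sh‖^2 * ‖e‖ * ‖uhh - p‖ := by
      have hd : uhh - uh = (uhh - p) + e := by rw [hedef]; abel
      have hSd : Sh (uhh - uh) = Sh (uhh - p) + Sh e := by rw [hd, map_add]
      rw [hSd, inner_add_left]
      have hie : |⟪Sh e, Sh (uhh - p)⟫| ≤ ‖Sh e‖ * ‖Sh (uhh - p)‖ :=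
        abs_real_inner_le_norm _ _
      have hne : ‖Sh e‖ ≤ ‖Sh‖ * ‖e‖ := Sh.le_opNorm e
      have hnr : ‖Sh (uhh - p)‖ ≤ ‖Sh‖ * ‖uhh - p‖ := Sh.le_opNorm _
      have hrr : ⟪Sh (uhh - p), Sh (uhh - p)⟫ = ‖Sh (uhh - p)‖^2 :=
        real_inner_self_eq_norm_sq _
      nlinarith [abs_nonneg (⟪Sh e, Sh (uhh - p)⟫ : ℝ), norm_nonneg (Sh e),
        norm_nonneg (Sh (uhh - p)), norm_nonneg (Sh : Lp ℝ 2 μ →L[ℝ] H),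
        norm_nonneg e, norm_nonneg (uhh - p),
        neg_abs_le (⟪Sh e, Sh (uhh - p)⟫ : ℝ)]
    have hkey2 : α * ‖uhh - p‖^2 ≤ ‖Sh‖^2 * ‖e‖ * ‖uhh - p‖ := key.trans hb1
    rcases eq_or_lt_of_le (norm_nonneg (uhh - p)) with h0 | h0
    · rw [← h0]
      positivity
    · have hstep : α * ‖uhh - p‖ ≤ ‖Sh‖^2 * ‖e‖ := by nlinarith [hkey2, h0]
      rw [div_mul_eq_mul_div, le_div_iff₀ hα]
      calc ‖uhh - p‖ * α = α * ‖uhh - p‖ := by ring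
        _ ≤ ‖Sh‖^2 * ‖e‖ := hstep
        _ ≤ ‖Sh‖^2 * δ := by nlinarith [he, sq_nonneg ‖Sh‖]
  have hfin : ‖uhh - uh‖ ≤ ‖uhh - p‖ + ‖e‖ := by
    have hd : uhh - uh = (uhh - p) + e := by rw [hedef]; abel
    rw [hd]
    exact norm_add_le _ _
  calc ‖uhh - uh‖ ≤ ‖uhh - p‖ + ‖e‖ := hfin
    _ ≤ ‖Sh‖^2 / α * δ + δ := add_le_add hr he
    _ = (1 + ‖Sh‖ ^ 2 / α) * δ := by ring
end

section
/- Under the assumptions of the previous statement, the operator I + (1/α) χ S_h* S_h (with χ an orthogonal projection and S_h* S_h positive semidefinite self-adjoint) is boundedly invertible, and its inverse satisfies ‖(I + (1/α) χ S_h* S_h)^{-1}‖ ≤ 1 + ‖S_h‖²/α. -/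
open RealInnerProductSpace

section aux
variable {U : Type*} [NormedAddCommGroup U] [InnerProductSpace ℝ U] [CompleteSpace U]

lemma proj_norm_apply_le (p : U →L[ℝ] U) (hsa : IsSelfAdjoint p) (hid : p ∘L p = p)
    (x : U) : ‖p x‖ ≤ ‖x‖ := by
  have h1 : ⟪p x, p x⟫ = ⟪x, p x⟫ := by
    have hadj : p.adjoint = p := hsa.adjoint_eq
    calc ⟪p x, p x⟫ = ⟪p.adjoint (p x), x⟫ := by
          rw [ContinuousLinearMap.adjoint_inner_left, real_inner_comm]
      _ = ⟪p (p x), x⟫ := by rw [hadj]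
      _ = ⟪x, p x⟫ := by
          have : p (p x) = p x := by
            have := congrArg (fun f : U →L[ℝ] U => f x) hid
            simpa using this
          rw [this, real_inner_comm]
  have h2 : ‖p x‖ * ‖p x‖ ≤ ‖x‖ * ‖p x‖ := by
    calc ‖p x‖ * ‖p x‖ = ⟪p x, p x⟫ := (real_inner_self_eq_norm_mul_norm _).symm
      _ = ⟪x, p x⟫ := h1
      _ ≤ ‖x‖ * ‖p x‖ := real_inner_le_norm _ _
  rcases eq_or_lt_of_le (norm_nonneg (p x)) with h | h
  · rw [← h]; exact norm_nonneg x
  · exact le_of_mul_le_mul_right h2 h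

lemma proj_norm_le (p : U →L[ℝ] U) (hsa : IsSelfAdjoint p) (hid : p ∘L p = p) :
    ‖p‖ ≤ 1 := by
  refine ContinuousLinearMap.opNorm_le_bound _ zero_le_one fun x => ?_
  simpa using proj_norm_apply_le p hsa hid x

end aux

/-- Uniform bounded invertibility of the semismooth Newton Jacobians
`M = I + (1/α) χ Sₕ* Sₕ`. -/
theorem stmt7
    {U H : Type*} [NormedAddCommGroup U] [InnerProductSpace ℝ U] [CompleteSpace U]
    [NormedAddCommGroup H] [InnerProductSpace ℝ H] [CompleteSpace H]
    (α : ℝ) (hα : 0 < α) (Sh : U →L[ℝ] H)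
    (χ : U →L[ℝ] U) (hχsa : IsSelfAdjoint χ) (hχidem : χ ∘L χ = χ)
    (A : U →L[ℝ] U)
    (hA : A = ContinuousLinearMap.id ℝ U + (1 / α) • (χ ∘L (Sh.adjoint ∘L Sh))) :
    ∃ B : U →L[ℝ] U,
      A ∘L B = ContinuousLinearMap.id ℝ U ∧
      B ∘L A = ContinuousLinearMap.id ℝ U ∧
      ‖B‖ ≤ 1 + ‖Sh‖ ^ 2 / α := by
  classical
  set c : ℝ := 1 / α with hc
  have hc_pos : 0 < c := by positivity
  set T : U →L[ℝ] U := Sh.adjoint ∘L Sh with hT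
  -- χ applied twice
  have hχχ : ∀ x, χ (χ x) = χ x := fun x => by
    have := congrArg (fun f : U →L[ℝ] U => f x) hχidem
    simpa using this
  -- inner product identities
  have hTinner : ∀ v, ⟪T v, v⟫ = ‖Sh v‖ ^ 2 := fun v => by
    rw [hT]
    simp only [ContinuousLinearMap.coe_comp', Function.comp_apply]
    rw [ContinuousLinearMap.adjoint_inner_left, real_inner_self_eq_norm_sq]
  have hχinner : ∀ x y, ⟪χ x, y⟫ = ⟪x, χ y⟫ := fun x y => by
    conv_lhs => rw [← hχsa.adjoint_eq]
    rw [ContinuousLinearMap.adjoint_inner_left]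
  -- the operator P
  set P : U →L[ℝ] U := 1 + c • (χ ∘L (T ∘L χ)) with hP
  have hPapply : ∀ x, P x = x + c • χ (T (χ x)) := fun x => by
    simp [hP]
  -- coercivity : ⟪P v, v⟫ ≥ ‖v‖²
  have hcoer : ∀ v, ‖v‖ * ‖v‖ ≤ ⟪P v, v⟫ := fun v => by
    rw [hPapply]
    rw [inner_add_left, real_inner_smul_left]
    have h1 : ⟪χ (T (χ v)), v⟫ = ‖Sh (χ v)‖ ^ 2 := by
      rw [hχinner]; exact hTinner (χ v)
    rw [h1, real_inner_self_eq_norm_mul_norm]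
    nlinarith [sq_nonneg (‖Sh (χ v)‖), norm_nonneg (Sh (χ v))]
  -- Lax-Milgram
  set Bil : U →L[ℝ] U →L[ℝ] ℝ := (innerSL ℝ).comp P with hBil
  have hBilApply : ∀ v w, Bil v w = ⟪P v, w⟫ := fun v w => rfl
  have hcoercive : IsCoercive Bil := ⟨1, one_pos, fun u => by
    rw [hBilApply]
    simpa using hcoer u⟩
  set E := hcoercive.continuousLinearEquivOfBilin with hE
  have hEeq : ∀ v, E v = P v := fun v => by
    apply ext_inner_right ℝ
    intro w
    rw [hcoercive.continuousLinearEquivOfBilin_apply, hBilApply]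
  set Q : U →L[ℝ] U := (E.symm : U →L[ℝ] U) with hQ
  have hPQ : ∀ x, P (Q x) = x := fun x => by
    rw [← hEeq]; exact E.apply_symm_apply x
  have hQP : ∀ x, Q (P x) = x := fun x => by
    have : Q (E x) = x := E.symm_apply_apply x
    rwa [hEeq] at this
  -- norm of Q
  have hQnorm : ‖Q‖ ≤ 1 := by
    refine ContinuousLinearMap.opNorm_le_bound _ zero_le_one fun g => ?_
    rw [one_mul]
    have h1 : ‖Q g‖ * ‖Q g‖ ≤ ‖g‖ * ‖Q g‖ := by
      calc ‖Q g‖ * ‖Q g‖ ≤ ⟪P (Q g), Q g⟫ := hcoer (Q g)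
        _ = ⟪g, Q g⟫ := by rw [hPQ]
        _ ≤ ‖g‖ * ‖Q g‖ := real_inner_le_norm _ _
    rcases eq_or_lt_of_le (norm_nonneg (Q g)) with h | h
    · rw [← h]; exact norm_nonneg g
    · exact le_of_mul_le_mul_right h1 h
  -- commutation of χ with P and Q
  have hχP : ∀ x, χ (P x) = P (χ x) := fun x => by
    rw [hPapply, hPapply]
    simp [map_add, map_smul, hχχ]
  have hχQ : ∀ x, χ (Q x) = Q (χ x) := fun x => by
    conv_lhs => rw [← hQP (χ (Q x))]
    congr 1
    rw [← hχP, hPQ]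
  -- ρ = 1 - χ
  set ρ : U →L[ℝ] U := 1 - χ with hρ
  have hρapply : ∀ x, ρ x = x - χ x := fun x => rfl
  have hρsa : IsSelfAdjoint ρ := (IsSelfAdjoint.one (R := U →L[ℝ] U)).sub hχsa
  have hρidem : ρ ∘L ρ = ρ := by
    ext x
    simp [hρapply, map_sub, hχχ]
  -- the nilpotent correction N
  set N : U →L[ℝ] U := c • (Q ∘L (χ ∘L (T ∘L ρ))) with hN
  have hNapply : ∀ x, N x = c • Q (χ (T (ρ x))) := fun x => by simp [hN]
  have hρQχ : ∀ x, ρ (Q (χ x)) = 0 := fun x => by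
    rw [hρapply, ← hχQ, hχχ, sub_self]
  have hNN : N ∘L N = 0 := by
    ext x
    simp only [ContinuousLinearMap.coe_comp', Function.comp_apply,
      ContinuousLinearMap.zero_apply]
    rw [hNapply, hNapply, map_smul, map_smul, map_smul, map_smul, hρQχ]
    simp
  -- factorization A = P ∘ (1 + N)
  have hfact : A = P ∘L (1 + N) := by
    ext x
    rw [hA]
    simp only [ContinuousLinearMap.coe_comp', Function.comp_apply,
      ContinuousLinearMap.add_apply, ContinuousLinearMap.one_apply,
      ContinuousLinearMap.smul_apply, ContinuousLinearMap.id_apply]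
    rw [hNapply, map_add, map_smul, hPQ, hPapply, hρapply, map_sub, map_sub]
    simp only [smul_sub]
    abel
  -- the inverse B
  refine ⟨(1 - N) ∘L Q, ?_, ?_, ?_⟩
  · -- A ∘ B = 1
    have key : (1 + N) ∘L ((1 - N) ∘L Q) = Q := by
      ext x
      simp only [ContinuousLinearMap.coe_comp', Function.comp_apply,
        ContinuousLinearMap.add_apply, ContinuousLinearMap.sub_apply,
        ContinuousLinearMap.one_apply]
      have hN2 : N (N (Q x)) = 0 := by
        have := congrArg (fun f : U →L[ℝ] U => f (Q x)) hNN
        simpa using this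
      rw [map_sub, hN2]
      abel
    ext x
    rw [hfact]
    simp only [ContinuousLinearMap.coe_comp', Function.comp_apply,
      ContinuousLinearMap.id_apply]
    have := congrArg (fun f : U →L[ℝ] U => f x) key
    simp only [ContinuousLinearMap.coe_comp', Function.comp_apply] at this
    rw [this, hPQ]
  · -- B ∘ A = 1
    ext x
    rw [hfact]
    simp only [ContinuousLinearMap.coe_comp', Function.comp_apply,
      ContinuousLinearMap.sub_apply, ContinuousLinearMap.add_apply,
      ContinuousLinearMap.one_apply, ContinuousLinearMap.id_apply]
    rw [hQP]
    have hNNx : N (N x) = 0 := by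
      have := congrArg (fun f : U →L[ℝ] U => f x) hNN
      simpa using this
    rw [map_add, hNNx, add_zero]
    abel
  · -- norm bound
    have hχnorm : ‖χ‖ ≤ 1 := proj_norm_le χ hχsa hχidem
    have hρnorm : ‖ρ‖ ≤ 1 := proj_norm_le ρ hρsa hρidem
    have hTnorm : ‖T‖ = ‖Sh‖ * ‖Sh‖ := ContinuousLinearMap.norm_adjoint_comp_self Sh
    have hNQ : ‖N ∘L Q‖ ≤ c * (‖Sh‖ * ‖Sh‖) := by
      have h1 : ‖N‖ ≤ c * (‖Sh‖ * ‖Sh‖) := by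
        have hns : ‖N‖ = ‖c‖ * ‖Q ∘L (χ ∘L (T ∘L ρ))‖ := by
          rw [hN]; exact norm_smul c (Q ∘L (χ ∘L (T ∘L ρ)))
        rw [hns]
        have h2 : ‖Q ∘L (χ ∘L (T ∘L ρ))‖ ≤ ‖Sh‖ * ‖Sh‖ := by
          calc ‖Q ∘L (χ ∘L (T ∘L ρ))‖ ≤ ‖Q‖ * ‖χ ∘L (T ∘L ρ)‖ :=
                ContinuousLinearMap.opNorm_comp_le _ _
            _ ≤ 1 * ‖χ ∘L (T ∘L ρ)‖ := by
                apply mul_le_mul_of_nonneg_right hQnorm (norm_nonneg _)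
            _ = ‖χ ∘L (T ∘L ρ)‖ := one_mul _
            _ ≤ ‖χ‖ * ‖T ∘L ρ‖ := ContinuousLinearMap.opNorm_comp_le _ _
            _ ≤ 1 * ‖T ∘L ρ‖ := by
                apply mul_le_mul_of_nonneg_right hχnorm (norm_nonneg _)
            _ = ‖T ∘L ρ‖ := one_mul _
            _ ≤ ‖T‖ * ‖ρ‖ := ContinuousLinearMap.opNorm_comp_le _ _
            _ ≤ ‖T‖ * 1 := by
                apply mul_le_mul_of_nonneg_left hρnorm (norm_nonneg _)
            _ = ‖Sh‖ * ‖Sh‖ := by rw [mul_one, hTnorm]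
        have hcn : ‖c‖ = c := abs_of_pos hc_pos
        rw [hcn]
        exact mul_le_mul_of_nonneg_left h2 hc_pos.le
      calc ‖N ∘L Q‖ ≤ ‖N‖ * ‖Q‖ := ContinuousLinearMap.opNorm_comp_le _ _
        _ ≤ (c * (‖Sh‖ * ‖Sh‖)) * 1 := by
            apply mul_le_mul h1 hQnorm (norm_nonneg _)
            positivity
        _ = c * (‖Sh‖ * ‖Sh‖) := mul_one _
    have hBsplit : (1 - N) ∘L Q = Q - N ∘L Q := by
      ext x; simp
    rw [hBsplit]
    calc ‖Q - N ∘L Q‖ ≤ ‖Q‖ + ‖N ∘L Q‖ := norm_sub_le _ _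
      _ ≤ 1 + c * (‖Sh‖ * ‖Sh‖) := add_le_add hQnorm hNQ
      _ = 1 + ‖Sh‖ ^ 2 / α := by rw [hc]; ring
end

section
/- Let Ω have finite measure, α > 0, a, b ∈ L^∞(Ω) with a ≤ b, S_h : L²(Ω) → L²(Ω) bounded linear, z ∈ L²(Ω). Let ū_h be the minimizer of (1/2)‖S_h v − z‖² + (α/2)‖v‖² over U_ad = {v : a ≤ v ≤ b a.e.}. Then for any admissible v ∈ U_ad, ‖v − ū_h‖_{L²} ≤ (1/α)‖ζ‖_{L²}, where p_h(v) = S_h*(S_h v − z) and ζ(ω) equals [α v + p_h(v)]_− where v(ω) = a(ω), [α v + p_h(v)]_+ where v(ω) = b(ω), and α v + p_h(v) elsewhere. -/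
set_option maxHeartbeats 1000000


open RealInnerProductSpace MeasureTheory

/-- A posteriori error bound (Krumbiegel–Rösch) used as stopping criterion:
`‖v - ūₕ‖ ≤ (1/α)‖ζ‖` for any admissible `v`. -/
theorem stmt11
    {Ω : Type*} [MeasurableSpace Ω] (μ : Measure Ω) [IsFiniteMeasure μ]
    (α : ℝ) (hα : 0 < α)
    (Sh : Lp ℝ 2 μ →L[ℝ] Lp ℝ 2 μ) (z : Lp ℝ 2 μ)
    (a b : Ω → ℝ) (hab : ∀ᵐ ω ∂μ, a ω ≤ b ω)
    (ubar : Lp ℝ 2 μ)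
    (hubar_ad : ∀ᵐ ω ∂μ, a ω ≤ ubar ω ∧ ubar ω ≤ b ω)
    (hubar_min : ∀ w : Lp ℝ 2 μ, (∀ᵐ ω ∂μ, a ω ≤ w ω ∧ w ω ≤ b ω) →
      (1 / 2) * ‖Sh ubar - z‖ ^ 2 + (α / 2) * ‖ubar‖ ^ 2 ≤
        (1 / 2) * ‖Sh w - z‖ ^ 2 + (α / 2) * ‖w‖ ^ 2)
    (v : Lp ℝ 2 μ) (hv_ad : ∀ᵐ ω ∂μ, a ω ≤ v ω ∧ v ω ≤ b ω)
    (p : Lp ℝ 2 μ) (hp : p = Sh.adjoint (Sh v - z))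
    (ζ : Lp ℝ 2 μ)
    (hζ : ∀ᵐ ω ∂μ, ζ ω =
      if v ω = a ω then min (α * v ω + p ω) 0
      else if v ω = b ω then max (α * v ω + p ω) 0
      else α * v ω + p ω) :
    ‖v - ubar‖ ≤ (1 / α) * ‖ζ‖ := by
  set d : Lp ℝ 2 μ := v - ubar with hd
  -- Variational inequality: 0 ≤ ⟪Sh ubar - z, Sh d⟫ + α * ⟪ubar, d⟫
  have hVI : 0 ≤ ⟪Sh ubar - z, Sh d⟫ + α * ⟪ubar, d⟫ := by
    by_contra hL
    push_neg at hL
    set L : ℝ := ⟪Sh ubar - z, Sh d⟫ + α * ⟪ubar, d⟫ with hLdef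
    have hdne : d ≠ 0 := by
      intro h
      rw [h] at hLdef
      simp [map_zero, inner_zero_right] at hLdef
      rw [hLdef] at hL
      exact lt_irrefl 0 hL
    set Q : ℝ := (‖Sh d‖ ^ 2 + α * ‖d‖ ^ 2) / 2 with hQdef
    have hQpos : 0 < Q := by
      have h1 : 0 < ‖d‖ := norm_pos_iff.mpr hdne
      have h2 : (0:ℝ) ≤ ‖Sh d‖ ^ 2 := sq_nonneg _
      have h3 : 0 < α * ‖d‖ ^ 2 := by positivity
      rw [hQdef]; linarith
    set t : ℝ := min 1 (-L / (2 * Q)) with htdef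
    have ht0 : 0 < t := by
      apply lt_min one_pos
      apply div_pos (by linarith) (by linarith)
    have ht1 : t ≤ 1 := min_le_left _ _
    have ht2 : t ≤ -L / (2 * Q) := min_le_right _ _
    set w : Lp ℝ 2 μ := ubar + t • d with hw
    have hw_ad : ∀ᵐ ω ∂μ, a ω ≤ w ω ∧ w ω ≤ b ω := by
      filter_upwards [hubar_ad, hv_ad, Lp.coeFn_add ubar (t • d),
        Lp.coeFn_smul t d, Lp.coeFn_sub v ubar] with ω h1 h2 h3 h4 h5
      have hwω : w ω = ubar ω + t * (v ω - ubar ω) := by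
        rw [hw]
        rw [h3]
        simp only [Pi.add_apply]
        rw [h4]
        simp only [Pi.smul_apply, smul_eq_mul]
        rw [← hd] at h5
        rw [h5]
        simp
      rw [hwω]
      constructor
      · nlinarith [h1.1, h2.1, ht0.le, ht1]
      · nlinarith [h1.2, h2.2, ht0.le, ht1]
    have hkey := hubar_min w hw_ad
    have hSw : Sh w - z = (Sh ubar - z) + t • Sh d := by
      rw [hw, map_add, ContinuousLinearMap.map_smul]; abel
    have hn1 : ‖Sh w - z‖ ^ 2 =
        ‖Sh ubar - z‖ ^ 2 + 2 * (t * ⟪Sh ubar - z, Sh d⟫) + t ^ 2 * ‖Sh d‖ ^ 2 := by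
      rw [hSw, norm_add_sq_real, real_inner_smul_right, norm_smul]
      simp [mul_pow, abs_of_pos ht0]
    have hn2 : ‖w‖ ^ 2 = ‖ubar‖ ^ 2 + 2 * (t * ⟪ubar, d⟫) + t ^ 2 * ‖d‖ ^ 2 := by
      rw [hw, norm_add_sq_real, real_inner_smul_right, norm_smul]
      simp [mul_pow, abs_of_pos ht0]
    rw [hn1, hn2] at hkey
    -- hkey gives 0 ≤ t * L + t^2 * Q
    have hkey2 : 0 ≤ t * L + t ^ 2 * Q := by
      rw [hLdef, hQdef]; nlinarith [hkey]
    have htQ : t * (2 * Q) ≤ -L :=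
      (le_div_iff₀ (by linarith : (0:ℝ) < 2 * Q)).mp ht2
    nlinarith [mul_le_mul_of_nonneg_left htQ ht0.le, mul_pos ht0 (neg_pos.mpr hL)]
  -- Pointwise sign structure: ⟪α • v + p - ζ, d⟫ ≤ 0
  have hsign : ⟪α • v + p - ζ, d⟫ ≤ 0 := by
    rw [MeasureTheory.L2.inner_def]
    simp only [RCLike.inner_apply, starRingEnd_apply, star_trivial]
    apply integral_nonpos_of_ae
    filter_upwards [hv_ad, hubar_ad, hζ, hab,
      Lp.coeFn_sub (α • v + p) ζ, Lp.coeFn_add (α • v) p, Lp.coeFn_smul α v,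
      Lp.coeFn_sub v ubar] with ω h1 h2 h3 h4 h5 h6 h7 h8
    have hF : (α • v + p - ζ) ω = α * v ω + p ω - ζ ω := by
      rw [h5]; simp only [Pi.sub_apply]
      rw [h6]; simp only [Pi.add_apply]
      rw [h7]; simp
    have hG : d ω = v ω - ubar ω := by rw [hd, h8]; simp
    simp only [Pi.zero_apply]
    rw [hF, hG]
    set g : ℝ := α * v ω + p ω with hg
    by_cases hva : v ω = a ω
    · rw [if_pos hva] at h3
      rw [h3]
      rcases le_total g 0 with hg0 | hg0
      · rw [min_eq_left hg0]; simp
      · rw [min_eq_right hg0]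
        have : v ω - ubar ω ≤ 0 := by rw [hva]; linarith [h2.1]
        nlinarith
    · rw [if_neg hva] at h3
      by_cases hvb : v ω = b ω
      · rw [if_pos hvb] at h3
        rw [h3]
        rcases le_total g 0 with hg0 | hg0
        · rw [max_eq_right hg0]
          have : 0 ≤ v ω - ubar ω := by rw [hvb]; linarith [h2.2]
          nlinarith
        · rw [max_eq_left hg0]; simp
      · rw [if_neg hvb] at h3
        rw [h3]; simp
  -- Combine
  have hvec : α • v + p = (α • d + Sh.adjoint (Sh d)) + (α • ubar + Sh.adjoint (Sh ubar - z)) := by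
    rw [hp, hd]
    have h1 : Sh (v - ubar) + (Sh ubar - z) = Sh v - z := by rw [map_sub]; abel
    have h2 : Sh.adjoint (Sh (v - ubar)) + Sh.adjoint (Sh ubar - z) = Sh.adjoint (Sh v - z) := by
      rw [← map_add, h1]
    rw [smul_sub, ← h2]
    abel
  have hexp : ⟪α • v + p - ζ, d⟫ = α * ⟪d, d⟫ + (⟪Sh ubar - z, Sh d⟫ + α * ⟪ubar, d⟫)
      + ⟪Sh d, Sh d⟫ - ⟪ζ, d⟫ := by
    rw [inner_sub_left, hvec, inner_add_left, inner_add_left, inner_add_left,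
      real_inner_smul_left, real_inner_smul_left,
      ContinuousLinearMap.adjoint_inner_left, ContinuousLinearMap.adjoint_inner_left]
    ring
  have hShd : (0:ℝ) ≤ ⟪Sh d, Sh d⟫ := real_inner_self_nonneg
  have hdd : ⟪d, d⟫ = ‖d‖ ^ 2 := real_inner_self_eq_norm_sq d
  have hζd : ⟪ζ, d⟫ ≤ ‖ζ‖ * ‖d‖ := real_inner_le_norm ζ d
  have hmain : α * ‖d‖ ^ 2 ≤ ‖ζ‖ * ‖d‖ := by
    have := hsign
    rw [hexp, hdd] at this
    linarith
  have hgoal : α * ‖d‖ ≤ ‖ζ‖ := by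
    rcases eq_or_lt_of_le (norm_nonneg d) with h0 | h0
    · rw [← h0]; simp [norm_nonneg ζ]
    · nlinarith
  rw [hd] at hgoal
  calc ‖v - ubar‖ = (1 / α) * (α * ‖v - ubar‖) := by field_simp
    _ ≤ (1 / α) * ‖ζ‖ := by
        apply mul_le_mul_of_nonneg_left hgoal
        positivity
end
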